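/- Let K be a field, m ≥ 1, s ∈ ℤ^m, let P ∈ K[X]^{m×m} be in s-Popov form with column degree δ = (δ_1,…,δ_m), and let R ∈ K[X]^{m×m} be left-unimodularly equivalent to P and (−δ)-reduced. Then R has column degree δ, the (−δ)-leading matrix lm_{−δ}(R) is invertible, and P = lm_{−δ}(R)^{−1}·R. -/

import Mathlib

open Polynomial Matrix

/-- Degree of a polynomial as an element of `WithBot ℤ`, with `degZ 0 = ⊥`. -/
noncomputable def degZ {K : Type*} [Field K] (p : Polynomial K) : WithBot ℤ :=
  p.degree.map (fun n : ℕ => (n : ℤ))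

/-- The `s`-degree of a row vector `p`: `max_j (deg p_j + s_j)`. -/
noncomputable def sdeg {K : Type*} [Field K] {ι : Type*} [Fintype ι]
    (s : ι → ℤ) (p : ι → Polynomial K) : WithBot ℤ :=
  Finset.univ.sup fun j => degZ (p j) + (s j : WithBot ℤ)

/-- `j` is the `s`-pivot index of the row `p`: the largest index at which the
`s`-degree of `p` is attained. -/
def IsPivotIndex {K : Type*} [Field K] {ι : Type*} [Fintype ι] [LinearOrder ι]
    (s : ι → ℤ) (p : ι → Polynomial K) (j : ι) : Prop :=
  degZ (p j) + (s j : WithBot ℤ) = sdeg s p ∧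
    ∀ k, j < k → degZ (p k) + (s k : WithBot ℤ) ≠ sdeg s p

/-- `P` is in `s`-Popov form: it is nonsingular, the `s`-pivot entries are monic and
on the diagonal, and in each column the nonpivot entries have degree less than
the pivot entry. -/
def IsPopov {K : Type*} [Field K] {m : ℕ} (s : Fin m → ℤ)
    (P : Matrix (Fin m) (Fin m) (Polynomial K)) : Prop :=
  P.det ≠ 0 ∧ (∀ i, IsPivotIndex s (P i) i) ∧ (∀ i, (P i i).Monic) ∧
    ∀ i j, i ≠ j → (P i j).degree < (P j j).degree

/-- `p` is an interpolant for `(E, J)`: `∑ i, (row i of E) ⋅ (p i)(J) = 0`. -/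
def IsInterpolant {K : Type*} [Field K] {ι n : Type*} [Fintype ι] [Fintype n] [DecidableEq n]
    (E : Matrix ι n K) (J : Matrix n n K) (p : ι → Polynomial K) : Prop :=
  ∑ i, Matrix.vecMul (E i) (Polynomial.aeval J (p i)) = 0

/-- `P` is an interpolation basis for `(E, J)`: its rows form a basis of the
`K[X]`-module of interpolants for `(E, J)`. -/
def IsInterpolationBasis {K : Type*} [Field K] {ι n : Type*} [Fintype ι] [Fintype n]
    [DecidableEq n] (E : Matrix ι n K) (J : Matrix n n K)
    (P : Matrix ι ι (Polynomial K)) : Prop :=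
  LinearIndependent (Polynomial K) (fun i => P i) ∧
    (Submodule.span (Polynomial K) (Set.range fun i => P i) : Set (ι → Polynomial K))
      = {p | IsInterpolant E J p}

/-- The product `Q ⋅ E`: the matrix over `K` whose `i`-th row is `∑ j, (E j) ⋅ (Q i j)(J)`. -/
noncomputable def polMulMat {K : Type*} [Field K] {κ ι n : Type*} [Fintype κ] [Fintype ι]
    [Fintype n] [DecidableEq n]
    (Q : Matrix κ ι (Polynomial K)) (E : Matrix ι n K) (J : Matrix n n K) : Matrix κ n K :=
  fun i => ∑ j, Matrix.vecMul (E j) (Polynomial.aeval J (Q i j))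

/-- The `s`-leading matrix of `R`: if row `i` has `s`-degree `d`, its `(i,j)` entry is
the coefficient of degree `d - s j` in `R i j` (and `0` if row `i` is zero). -/
noncomputable def leadingMatrix {K : Type*} [Field K] {ι : Type*} [Fintype ι]
    (s : ι → ℤ) (R : Matrix ι ι (Polynomial K)) : Matrix ι ι K := fun i j =>
  WithBot.recBotCoe 0
    (fun d => if 0 ≤ d - s j then (R i j).coeff (d - s j).toNat else 0)
    (sdeg s (R i))

/-- if `P` is in `s`-Popov form with column degree `δ` and `R` is
left-unimodularly equivalent to `P` and `(-δ)`-reduced, then `R` has column degree `δ`,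
the `(-δ)`-leading matrix of `R` is invertible, and `P = lm_{-δ}(R)⁻¹ ⋅ R`. -/
lemma coeff_prod_sum {R : Type*} [CommSemiring R] {ι : Type*} (s : Finset ι)
    (f : ι → Polynomial R) (d : ι → ℕ) (h : ∀ i ∈ s, (f i).natDegree ≤ d i) :
    (∏ i ∈ s, f i).coeff (∑ i ∈ s, d i) = ∏ i ∈ s, (f i).coeff (d i) := by
  induction s using Finset.cons_induction with
  | empty => simp
  | cons a s ha ih =>
    rw [Finset.prod_cons, Finset.sum_cons, Finset.prod_cons,
      Polynomial.coeff_mul_add_eq_of_natDegree_le (h a (Finset.mem_cons_self a s))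
        ((Polynomial.natDegree_prod_le s f).trans
          (Finset.sum_le_sum fun i hi => h i (Finset.mem_cons_of_mem hi))),
      ih fun i hi => h i (Finset.mem_cons_of_mem hi)]

lemma coeff_det_sum {R : Type*} [CommRing R] {m : ℕ}
    (M : Matrix (Fin m) (Fin m) (Polynomial R)) (D : Fin m → ℕ)
    (h : ∀ i j, (M i j).natDegree ≤ D i) :
    M.det.coeff (∑ i, D i) =
      (Matrix.of fun i j => (M i j).coeff (D i)).det := by
  rw [Matrix.det_apply, Matrix.det_apply, Polynomial.finset_sum_coeff]
  refine Finset.sum_congr rfl fun σ _ => ?_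
  rw [Polynomial.coeff_smul]
  congr 1
  rw [← Equiv.sum_comp σ D]
  exact coeff_prod_sum _ _ _ fun i _ => h (σ i) i

theorem reduced_equiv_recovers_popov {K : Type*} [Field K] {m : ℕ} (hm : 1 ≤ m)
    (s : Fin m → ℤ) (P R U : Matrix (Fin m) (Fin m) (Polynomial K))
    (hP : IsPopov s P) (δ : Fin m → ℕ) (hδ : ∀ j, (P j j).natDegree = δ j)
    (hU : ∃ c : K, c ≠ 0 ∧ U.det = Polynomial.C c) (hRU : R = U * P)
    (hred : (leadingMatrix (fun j => -(δ j : ℤ)) R).det ≠ 0) :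
    (∀ j, (Finset.univ.sup fun i => (R i j).degree) = (δ j : WithBot ℕ)) ∧
      IsUnit (leadingMatrix (fun j => -(δ j : ℤ)) R) ∧
      P = ((leadingMatrix (fun j => -(δ j : ℤ)) R)⁻¹).map Polynomial.C * R := by
  obtain ⟨hPdet, hpiv, hmon, hcol⟩ := hP
  obtain ⟨c, hc, hdetU⟩ := hU
  have hnem : Nonempty (Fin m) := ⟨⟨0, hm⟩⟩
  have hPjj : ∀ j, (P j j).degree = ((δ j : ℕ) : WithBot ℕ) := fun j => by
    rw [Polynomial.degree_eq_natDegree (hmon j).ne_zero, hδ j]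
  have hPle : ∀ k j, (P k j).degree ≤ ((δ j : ℕ) : WithBot ℕ) := fun k j => by
    by_cases hkj : k = j
    · subst hkj; exact (hPjj k).le
    · exact le_of_lt ((hcol k j hkj).trans_le (hPjj j).le)
  have hPnatle : ∀ k j, (P k j).natDegree ≤ δ j := fun k j =>
    Polynomial.natDegree_le_iff_degree_le.mpr (hPle k j)
  have hPcoeff : ∀ k j, (P k j).coeff (δ j) = if k = j then 1 else 0 := fun k j => by
    by_cases hkj : k = j
    · subst hkj; rw [if_pos rfl, ← hδ k]; exact (hmon k).coeff_natDegree
    · rw [if_neg hkj]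
      exact Polynomial.coeff_eq_zero_of_degree_lt ((hcol k j hkj).trans_le (hPjj j).le)
  set D : Fin m → ℕ := fun i => Finset.univ.sup fun k => (U i k).natDegree with hDdef
  have hUD : ∀ i k, (U i k).natDegree ≤ D i := fun i k =>
    Finset.le_sup (f := fun k => (U i k).natDegree) (Finset.mem_univ k)
  have hRdeg : ∀ i j, (R i j).natDegree ≤ D i + δ j := fun i j => by
    rw [hRU, Matrix.mul_apply]
    refine Polynomial.natDegree_sum_le_of_forall_le _ _ fun k _ => ?_
    exact Polynomial.natDegree_mul_le.trans (add_le_add (hUD i k) (hPnatle k j))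
  have hRcoeff : ∀ i j, (R i j).coeff (D i + δ j) = (U i j).coeff (D i) := fun i j => by
    rw [hRU, Matrix.mul_apply, Polynomial.finset_sum_coeff]
    have h1 : ∀ k, (U i k * P k j).coeff (D i + δ j)
        = (U i k).coeff (D i) * (if k = j then 1 else 0) := fun k => by
      rw [Polynomial.coeff_mul_add_eq_of_natDegree_le (hUD i k) (hPnatle k j), hPcoeff k j]
    simp_rw [h1, mul_ite, mul_one, mul_zero]
    simp
  have hCc : (Polynomial.C c : Polynomial K) ≠ 0 := fun h => hc (by simpa using h)
  have hrow : ∀ i, ∃ j, (U i j).coeff (D i) ≠ 0 := fun i => by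
    have hne : ∃ k, U i k ≠ 0 := by
      by_contra h
      push_neg at h
      have h0 : U.det = 0 := Matrix.det_eq_zero_of_row_eq_zero i h
      rw [hdetU] at h0; exact hCc h0
    obtain ⟨k, hk⟩ := hne
    obtain ⟨j, -, hj⟩ := Finset.exists_mem_eq_sup Finset.univ Finset.univ_nonempty
      (fun k => (U i k).natDegree)
    by_cases h0 : U i j = 0
    · have hDi : D i = 0 := by rw [hDdef]; simp only []; rw [hj, h0, Polynomial.natDegree_zero]
      refine ⟨k, ?_⟩
      rw [hDi]
      intro hz
      apply hk
      have hUC := Polynomial.eq_C_of_natDegree_le_zero ((hUD i k).trans hDi.le)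
      rw [hUC, hz, map_zero]
    · refine ⟨j, ?_⟩
      have hDij : D i = (U i j).natDegree := hj
      rw [hDij]
      exact Polynomial.leadingCoeff_ne_zero.mpr h0
  have hsdeg : ∀ i, sdeg (fun j => -(δ j : ℤ)) (R i) = ((D i : ℤ) : WithBot ℤ) := fun i => by
    apply le_antisymm
    · refine Finset.sup_le fun j _ => ?_
      by_cases h0 : R i j = 0
      · simp [degZ, h0]
      · have hdz : degZ (R i j) = (((R i j).natDegree : ℤ) : WithBot ℤ) := by
          rw [degZ, Polynomial.degree_eq_natDegree h0]; rfl
        rw [hdz, ← WithBot.coe_add, WithBot.coe_le_coe]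
        show ((R i j).natDegree : ℤ) + -(δ j : ℤ) ≤ (D i : ℤ)
        have := hRdeg i j
        omega
    · obtain ⟨j, hj⟩ := hrow i
      have hne : (R i j).coeff (D i + δ j) ≠ 0 := by rw [hRcoeff]; exact hj
      have hR0 : R i j ≠ 0 := fun h => hne (by simp [h])
      have hdeg : (R i j).natDegree = D i + δ j :=
        le_antisymm (hRdeg i j) (Polynomial.le_natDegree_of_ne_zero hne)
      have hdz : degZ (R i j) = (((D i + δ j : ℕ) : ℤ) : WithBot ℤ) := by
        rw [degZ, Polynomial.degree_eq_natDegree hR0, hdeg]; rfl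
      refine le_trans ?_ (Finset.le_sup (Finset.mem_univ j))
      rw [hdz, ← WithBot.coe_add, WithBot.coe_le_coe]
      show (D i : ℤ) ≤ ((D i + δ j : ℕ) : ℤ) + -(δ j : ℤ)
      push_cast
      omega
  have hlm : ∀ i j, leadingMatrix (fun j => -(δ j : ℤ)) R i j = (U i j).coeff (D i) := by
    intro i j
    rw [leadingMatrix, hsdeg i]
    show (if 0 ≤ (D i : ℤ) - (-(δ j : ℤ)) then (R i j).coeff ((D i : ℤ) - (-(δ j : ℤ))).toNat
      else 0) = _
    rw [if_pos (by omega)]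
    have ht : ((D i : ℤ) - (-(δ j : ℤ))).toNat = D i + δ j := by omega
    rw [ht, hRcoeff]
  have hlmM : leadingMatrix (fun j => -(δ j : ℤ)) R
      = Matrix.of fun i j => (U i j).coeff (D i) := by
    ext i j; exact hlm i j
  have hcoefdet := coeff_det_sum U D hUD
  rw [hdetU, ← hlmM] at hcoefdet
  have hsum0 : (∑ i, D i) = 0 := by
    by_contra h
    rw [Polynomial.coeff_C, if_neg h] at hcoefdet
    exact hred hcoefdet.symm
  have hD0 : ∀ i, D i = 0 := fun i => by
    have := Finset.sum_eq_zero_iff.mp hsum0 i (Finset.mem_univ i)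
    exact this
  set L := leadingMatrix (fun j => -(δ j : ℤ)) R with hL
  have hUL : U = L.map Polynomial.C := by
    refine Matrix.ext fun i j => ?_
    rw [Matrix.map_apply, hlm i j, hD0 i]
    exact Polynomial.eq_C_of_natDegree_le_zero (by rw [← hD0 i]; exact hUD i j)
  have hLunit : IsUnit L.det := isUnit_iff_ne_zero.mpr hred
  have hPmain : P = (L⁻¹).map Polynomial.C * R := by
    rw [hRU, hUL, ← Matrix.mul_assoc, ← Matrix.map_mul,
      Matrix.nonsing_inv_mul L hLunit, Matrix.map_one _ (map_zero _) (map_one _), Matrix.one_mul]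
  refine ⟨?_, (Matrix.isUnit_iff_isUnit_det L).mpr hLunit, hPmain⟩
  intro j
  apply le_antisymm
  · refine Finset.sup_le fun i _ => ?_
    refine le_trans Polynomial.degree_le_natDegree ?_
    have h1 : (R i j).natDegree ≤ δ j := by have := hRdeg i j; rw [hD0 i] at this; simpa using this
    exact_mod_cast h1
  · have hPjR : P j j = ∑ k, Polynomial.C ((L⁻¹) j k) * R k j := by
      conv_lhs => rw [hPmain]
      rw [Matrix.mul_apply]
      simp [Matrix.map_apply]
    calc ((δ j : ℕ) : WithBot ℕ) = (P j j).degree := (hPjj j).symm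
      _ ≤ Finset.univ.sup fun k => (Polynomial.C ((L⁻¹) j k) * R k j).degree := by
          rw [hPjR]; exact Polynomial.degree_sum_le _ _
      _ ≤ Finset.univ.sup fun k => (R k j).degree := by
          refine Finset.sup_mono_fun fun k _ => ?_
          refine (Polynomial.degree_mul_le _ _).trans ?_
          calc (Polynomial.C ((L⁻¹) j k)).degree + (R k j).degree
              ≤ 0 + (R k j).degree := add_le_add Polynomial.degree_C_le le_rfl
            _ = (R k j).degree := zero_add _
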